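/- For all ordinals α, β with β > 0: α ≪ α # β. -/

import Mathlib

open Ordinal Set
namespace Ordinal
universe u
/-- Natural (Hessenberg) addition of ordinals, as in the older Mathlib. -/
noncomputable def nadd (a b : Ordinal.{u}) : Ordinal.{u} :=
  max (⨆ x : Set.Iio a, Order.succ (nadd x.1 b)) (⨆ x : Set.Iio b, Order.succ (nadd a x.1))
termination_by (a, b)
decreasing_by
  · exact Prod.Lex.left _ _ x.2
  · exact Prod.Lex.right _ x.2
end Ordinal
infixl:65 " ♯ " => Ordinal.nadd

namespace Ordinal

theorem nadd_def' (a b : Ordinal) : a ♯ b =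
    max (⨆ x : Set.Iio a, Order.succ (x.1 ♯ b)) (⨆ x : Set.Iio b, Order.succ (a ♯ x.1)) := by
  rw [nadd]

theorem nadd_lt_nadd_right {a b : Ordinal} (h : a < b) (c : Ordinal) : a ♯ c < b ♯ c := by
  rw [nadd_def' b c]
  refine lt_of_lt_of_le ?_ (le_max_left _ _)
  exact (Order.lt_succ (a ♯ c)).trans_le
    (Ordinal.le_iSup (fun x : Set.Iio b => Order.succ (x.1 ♯ c)) ⟨a, h⟩)

theorem nadd_lt_nadd_left {b c : Ordinal} (h : b < c) (a : Ordinal) : a ♯ b < a ♯ c := by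
  rw [nadd_def' a c]
  refine lt_of_lt_of_le ?_ (le_max_right _ _)
  exact (Order.lt_succ (a ♯ b)).trans_le
    (Ordinal.le_iSup (fun x : Set.Iio c => Order.succ (a ♯ x.1)) ⟨b, h⟩)

theorem nadd_le_nadd_left {b c : Ordinal} (h : b ≤ c) (a : Ordinal) : a ♯ b ≤ a ♯ c := by
  rcases h.lt_or_eq with h | rfl
  · exact (nadd_lt_nadd_left h a).le
  · exact le_rfl

theorem nadd_le_nadd_right {a b : Ordinal} (h : a ≤ b) (c : Ordinal) : a ♯ c ≤ b ♯ c := by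
  rcases h.lt_or_eq with h | rfl
  · exact (nadd_lt_nadd_right h c).le
  · exact le_rfl

theorem nadd_le_iff {a b c : Ordinal} :
    a ♯ b ≤ c ↔ (∀ a' < a, a' ♯ b < c) ∧ ∀ b' < b, a ♯ b' < c := by
  constructor
  · intro h
    exact ⟨fun a' ha => (nadd_lt_nadd_right ha b).trans_le h,
      fun b' hb => (nadd_lt_nadd_left hb a).trans_le h⟩
  · rintro ⟨h1, h2⟩
    rw [nadd_def']
    exact max_le (ciSup_le' fun x => Order.succ_le_of_lt (h1 x.1 x.2))
      (ciSup_le' fun x => Order.succ_le_of_lt (h2 x.1 x.2))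

theorem lt_nadd_iff {a b c : Ordinal} :
    a < b ♯ c ↔ (∃ b' < b, a ≤ b' ♯ c) ∨ ∃ c' < c, a ≤ b ♯ c' := by
  rw [← not_le, nadd_le_iff]
  simp only [not_and_or, not_forall, not_lt, exists_prop, Classical.not_imp]

theorem le_self_nadd {a b : Ordinal} : a ≤ a ♯ b := by
  induction a using Ordinal.induction with
  | _ a IH => exact le_of_forall_lt fun c hc => (IH c hc).trans_lt (nadd_lt_nadd_right hc b)

theorem nadd_comm (a b : Ordinal) : a ♯ b = b ♯ a := by
  induction a using Ordinal.induction generalizing b with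
  | _ a IHa =>
  induction b using Ordinal.induction with
  | _ b IHb =>
  apply le_antisymm
  · rw [nadd_le_iff]
    exact ⟨fun a' h => by rw [IHa a' h b]; exact nadd_lt_nadd_left h b,
      fun b' h => by rw [IHb b' h]; exact nadd_lt_nadd_right h a⟩
  · rw [nadd_le_iff]
    exact ⟨fun b' h => by rw [← IHb b' h]; exact nadd_lt_nadd_left h a,
      fun a' h => by rw [← IHa a' h b]; exact nadd_lt_nadd_right h b⟩

theorem le_nadd_self {a b : Ordinal} : a ≤ b ♯ a := by
  rw [nadd_comm]; exact le_self_nadd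

theorem nadd_zero (a : Ordinal) : a ♯ 0 = a := by
  induction a using Ordinal.induction with
  | _ a IH =>
  apply le_antisymm
  · rw [nadd_le_iff]
    exact ⟨fun a' h => by rw [IH a' h]; exact h,
      fun b' h => absurd h (not_lt_of_ge (zero_le (a := b')))⟩
  · exact le_self_nadd

theorem zero_nadd (a : Ordinal) : 0 ♯ a = a := by
  rw [nadd_comm, nadd_zero]

theorem nadd_left_cancel {a b c : Ordinal} (h : a ♯ b = a ♯ c) : b = c := by
  rcases lt_trichotomy b c with h' | h' | h'
  · exact absurd h (nadd_lt_nadd_left h' a).ne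
  · exact h'
  · exact absurd h (nadd_lt_nadd_left h' a).ne'

theorem nadd_right_cancel {a b c : Ordinal} (h : b ♯ a = c ♯ a) : b = c :=
  nadd_left_cancel (a := a) (by rwa [nadd_comm a b, nadd_comm a c])

theorem nadd_assoc (a b c : Ordinal) : a ♯ b ♯ c = a ♯ (b ♯ c) := by
  induction a using Ordinal.induction generalizing b c with
  | _ a IHa =>
  induction b using Ordinal.induction generalizing c with
  | _ b IHb =>
  induction c using Ordinal.induction with
  | _ c IHc =>
  apply le_antisymm
  · rw [nadd_le_iff]
    refine ⟨fun x hx => ?_, fun c' hc => ?_⟩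
    · rcases lt_nadd_iff.1 hx with ⟨a', ha, hle⟩ | ⟨b', hb, hle⟩
      · calc x ♯ c ≤ a' ♯ b ♯ c := nadd_le_nadd_right hle c
          _ = a' ♯ (b ♯ c) := IHa a' ha b c
          _ < a ♯ (b ♯ c) := nadd_lt_nadd_right ha _
      · calc x ♯ c ≤ a ♯ b' ♯ c := nadd_le_nadd_right hle c
          _ = a ♯ (b' ♯ c) := IHb b' hb c
          _ < a ♯ (b ♯ c) := nadd_lt_nadd_left (nadd_lt_nadd_right hb c) a
    · rw [IHc c' hc]; exact nadd_lt_nadd_left (nadd_lt_nadd_left hc b) a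
  · rw [nadd_le_iff]
    refine ⟨fun a' ha => ?_, fun y hy => ?_⟩
    · rw [← IHa a' ha b c]; exact nadd_lt_nadd_right (nadd_lt_nadd_right ha b) c
    · rcases lt_nadd_iff.1 hy with ⟨b', hb, hle⟩ | ⟨c', hc, hle⟩
      · calc a ♯ y ≤ a ♯ (b' ♯ c) := nadd_le_nadd_left hle a
          _ = a ♯ b' ♯ c := (IHb b' hb c).symm
          _ < a ♯ b ♯ c := nadd_lt_nadd_right (nadd_lt_nadd_left hb a) c
      · calc a ♯ y ≤ a ♯ (b ♯ c') := nadd_le_nadd_left hle a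
          _ = a ♯ b ♯ c' := (IHc c' hc).symm
          _ < a ♯ b ♯ c := nadd_lt_nadd_left hc _

theorem nadd_one (a : Ordinal) : a ♯ 1 = Order.succ a := by
  induction a using Ordinal.induction with
  | _ a IH =>
  apply le_antisymm
  · rw [nadd_le_iff]
    refine ⟨fun a' h => ?_, fun b' h => ?_⟩
    · rw [IH a' h]; exact Order.succ_lt_succ h
    · rw [Ordinal.lt_one_iff_zero.1 h, nadd_zero]; exact Order.lt_succ a
  · exact Order.succ_le_of_lt (by simpa [nadd_zero] using nadd_lt_nadd_left zero_lt_one a)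

theorem one_nadd (a : Ordinal) : 1 ♯ a = Order.succ a := by
  rw [nadd_comm, nadd_one]

theorem nadd_nat (a : Ordinal) (n : ℕ) : a ♯ n = a + n := by
  induction n with
  | zero => simp [nadd_zero]
  | succ n ih =>
    have h1 : ((n + 1 : ℕ) : Ordinal) = (n : Ordinal) ♯ 1 := by
      rw [nadd_one, Order.succ_eq_add_one, Nat.cast_succ]
    conv_lhs => rw [h1]
    rw [← nadd_assoc, ih, nadd_one, Order.succ_eq_add_one, Nat.cast_succ, add_assoc]

end Ordinal

noncomputable section

/-- A cardinal is weakly inaccessible: uncountable, regular, and a limit cardinal. -/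
def WeaklyInaccessible (c : Cardinal) : Prop :=
  Cardinal.aleph0 < c ∧ c.IsRegular ∧ ∀ x < c, Order.succ x < c

/-- `I` is (the initial ordinal of) the least weakly inaccessible cardinal. -/
def I : Ordinal := (sInf {c : Cardinal | WeaklyInaccessible c}).ord

/-- `Om α` is `Ω_α`: `0` for `α = 0` and the initial ordinal of `ℵ_α` otherwise. -/
def Om (α : Ordinal) : Ordinal := if α = 0 then 0 else (Cardinal.aleph α).ord

/-- `R = {Ω_{μ+1} : μ < I} ∪ {I}`. -/
def R : Set Ordinal := {o | (∃ μ < I, o = Om (μ + 1)) ∨ o = I}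

/-- Given the family of hulls at earlier stages, the collapse `ψ_σ`. -/
def psiOf (F : Set Ordinal → Set Ordinal) (σ : Ordinal) : Ordinal :=
  sInf ({β | β < σ ∧ σ ∈ F (Set.Iio β) ∧ F (Set.Iio β) ∩ Set.Iio σ ⊆ Set.Iio β} ∪ {σ})

instance : WellFoundedRelation Ordinal := ⟨(· < ·), Ordinal.lt_wf⟩

/-- `H α X` is the least set of ordinals containing `X ∪ {0, I}` and closed under
ordinal addition, `β ↦ ω^β`, `β ↦ Ω_β`, and `(σ, β) ↦ ψ_σ β` for `σ ∈ R` and `β < α`. -/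
def H (α : Ordinal) (X : Set Ordinal) : Set Ordinal :=
  ⋂₀ {Y : Set Ordinal | X ∪ {0, I} ⊆ Y ∧
      (∀ γ ∈ Y, ∀ δ ∈ Y, γ + δ ∈ Y) ∧
      (∀ γ ∈ Y, Ordinal.omega0 ^ γ ∈ Y) ∧
      (∀ γ ∈ Y, Om γ ∈ Y) ∧
      (∀ σ ∈ R, ∀ β ∈ Y, β < α → σ ∈ Y → psiOf (H β) σ ∈ Y)}
termination_by α
decreasing_by assumption

/-- The collapsing function `ψ_σ α`. -/
def psi (σ α : Ordinal) : Ordinal := psiOf (H α) σ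

/-- The relation `δ₀ ≪ δ₁ {η}`. -/
def llr (η δ₀ δ₁ : Ordinal) : Prop :=
  δ₀ < δ₁ ∧ ∀ σ ∈ R, ∀ α : Ordinal,
    δ₁ ∈ H α (Set.Iio (psi σ α)) → η ∈ H α (Set.Iio (psi σ α)) → δ₀ ∈ H α (Set.Iio (psi σ α))

private lemma natCast_nadd_lt_omega0 {a b : Ordinal} (ha : a < ω) (hb : b < ω) : a ♯ b < ω := by
  obtain ⟨m, rfl⟩ := lt_omega0.1 ha
  obtain ⟨n, rfl⟩ := lt_omega0.1 hb
  rw [nadd_nat]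
  exact_mod_cast nat_lt_omega0 (m + n)

private lemma sub_log_lt {δ : Ordinal} (h : δ ≠ 0) : δ - ω ^ Ordinal.log ω δ < δ := by
  by_contra hc
  push_neg at hc
  have h2 : ω ^ Ordinal.log ω δ + δ = δ := by
    refine le_antisymm ?_ le_add_self
    calc ω ^ Ordinal.log ω δ + δ ≤ ω ^ Ordinal.log ω δ + (δ - ω ^ Ordinal.log ω δ) :=
          add_le_add_right hc _
      _ = δ := Ordinal.add_sub_cancel_of_le (Ordinal.opow_log_le_self ω h)
  have h3 : ∀ n : ℕ, ω ^ Ordinal.log ω δ * n + δ = δ := by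
    intro n
    induction n with
    | zero => simp
    | succ n ih =>
      have : ((n : Ordinal) + 1) = Order.succ (n : Ordinal) := rfl
      push_cast
      rw [this, Ordinal.mul_succ, add_assoc, h2, ih]
  have h4 : ω ^ Order.succ (Ordinal.log ω δ) ≤ δ := by
    rw [opow_succ]
    rw [Ordinal.mul_le_iff_of_isSuccLimit isSuccLimit_omega0]
    intro b' hb'
    obtain ⟨n, rfl⟩ := lt_omega0.1 hb'
    calc ω ^ Ordinal.log ω δ * n ≤ ω ^ Ordinal.log ω δ * n + δ := le_self_add
      _ = δ := h3 n
  exact absurd h4 (lt_opow_succ_log_self one_lt_omega0 δ).not_ge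

private lemma MI_of (e : Ordinal) (hp : ∀ a b, a < ω ^ e → b < ω ^ e → a ♯ b < ω ^ e) :
    ∀ (p m n : Ordinal), m ♯ n = p → ∀ (q t s : Ordinal), t ♯ s = q → t < ω ^ e → s < ω ^ e →
      (ω ^ e * m + t) ♯ (ω ^ e * n + s) = ω ^ e * (m ♯ n) + (t ♯ s) := by
  have hW0 : (ω ^ e) ≠ 0 := (Ordinal.opow_pos e omega0_pos).ne'
  intro p
  induction p using Ordinal.induction with
  | _ p IHp =>
  intro m n hmn q
  induction q using Ordinal.induction with
  | _ q IHq =>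
  intro t s hts ht hs
  subst hmn hts
  apply le_antisymm
  · rw [nadd_le_iff]
    constructor
    · intro a' ha'
      rcases le_or_gt (ω ^ e * m) a' with h1 | h1
      · obtain ⟨t', rfl⟩ : ∃ t', a' = ω ^ e * m + t' :=
          ⟨a' - ω ^ e * m, (Ordinal.add_sub_cancel_of_le h1).symm⟩
        have ht' : t' < t := (add_lt_add_iff_left _).1 ha'
        rw [IHq (t' ♯ s) (nadd_lt_nadd_right ht' s) t' s rfl (ht'.trans ht) hs]
        exact add_lt_add_right (nadd_lt_nadd_right ht' s) _
      · have hm' : a' / ω ^ e < m := (Ordinal.div_lt hW0).2 h1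
        have hu : a' % ω ^ e < ω ^ e := Ordinal.mod_lt a' hW0
        have hd : ω ^ e * (a' / ω ^ e) + a' % ω ^ e = a' := Ordinal.div_add_mod a' (ω ^ e)
        rw [← hd, IHp _ (nadd_lt_nadd_right hm' n) _ n rfl _ _ _ rfl hu hs]
        calc ω ^ e * (a' / ω ^ e ♯ n) + (a' % ω ^ e ♯ s)
            < ω ^ e * (a' / ω ^ e ♯ n) + ω ^ e := add_lt_add_right (hp _ _ hu hs) _
          _ = ω ^ e * Order.succ (a' / ω ^ e ♯ n) := (Ordinal.mul_succ _ _).symm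
          _ ≤ ω ^ e * (m ♯ n) :=
              mul_le_mul_right (Order.succ_le_of_lt (nadd_lt_nadd_right hm' n)) _
          _ ≤ ω ^ e * (m ♯ n) + (t ♯ s) := le_self_add
    · intro b' hb'
      rcases le_or_gt (ω ^ e * n) b' with h1 | h1
      · obtain ⟨s', rfl⟩ : ∃ s', b' = ω ^ e * n + s' :=
          ⟨b' - ω ^ e * n, (Ordinal.add_sub_cancel_of_le h1).symm⟩
        have hs' : s' < s := (add_lt_add_iff_left _).1 hb'
        rw [IHq (t ♯ s') (nadd_lt_nadd_left hs' t) t s' rfl ht (hs'.trans hs)]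
        exact add_lt_add_right (nadd_lt_nadd_left hs' t) _
      · have hn' : b' / ω ^ e < n := (Ordinal.div_lt hW0).2 h1
        have hu : b' % ω ^ e < ω ^ e := Ordinal.mod_lt b' hW0
        have hd : ω ^ e * (b' / ω ^ e) + b' % ω ^ e = b' := Ordinal.div_add_mod b' (ω ^ e)
        rw [← hd, IHp _ (nadd_lt_nadd_left hn' m) m _ rfl _ _ _ rfl ht hu]
        calc ω ^ e * (m ♯ b' / ω ^ e) + (t ♯ b' % ω ^ e)
            < ω ^ e * (m ♯ b' / ω ^ e) + ω ^ e := add_lt_add_right (hp _ _ ht hu) _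
          _ = ω ^ e * Order.succ (m ♯ b' / ω ^ e) := (Ordinal.mul_succ _ _).symm
          _ ≤ ω ^ e * (m ♯ n) :=
              mul_le_mul_right (Order.succ_le_of_lt (nadd_lt_nadd_left hn' m)) _
          _ ≤ ω ^ e * (m ♯ n) + (t ♯ s) := le_self_add
  · apply le_of_forall_lt
    intro x hx
    rcases le_or_gt (ω ^ e * (m ♯ n)) x with h1 | h1
    · obtain ⟨u, rfl⟩ : ∃ u, x = ω ^ e * (m ♯ n) + u :=
        ⟨x - ω ^ e * (m ♯ n), (Ordinal.add_sub_cancel_of_le h1).symm⟩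
      have hu : u < t ♯ s := (add_lt_add_iff_left _).1 hx
      rcases lt_nadd_iff.1 hu with ⟨t', ht', hle⟩ | ⟨s', hs', hle⟩
      · calc ω ^ e * (m ♯ n) + u ≤ ω ^ e * (m ♯ n) + (t' ♯ s) := add_le_add_right hle _
          _ = (ω ^ e * m + t') ♯ (ω ^ e * n + s) :=
              (IHq (t' ♯ s) (nadd_lt_nadd_right ht' s) t' s rfl (ht'.trans ht) hs).symm
          _ < (ω ^ e * m + t) ♯ (ω ^ e * n + s) :=
              nadd_lt_nadd_right (add_lt_add_right ht' _) _
      · calc ω ^ e * (m ♯ n) + u ≤ ω ^ e * (m ♯ n) + (t ♯ s') := add_le_add_right hle _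
          _ = (ω ^ e * m + t) ♯ (ω ^ e * n + s') :=
              (IHq (t ♯ s') (nadd_lt_nadd_left hs' t) t s' rfl ht (hs'.trans hs)).symm
          _ < (ω ^ e * m + t) ♯ (ω ^ e * n + s) :=
              nadd_lt_nadd_left (add_lt_add_right hs' _) _
    · have hk : x / ω ^ e < m ♯ n := (Ordinal.div_lt hW0).2 h1
      have hu : x % ω ^ e < ω ^ e := Ordinal.mod_lt x hW0
      have hd : ω ^ e * (x / ω ^ e) + x % ω ^ e = x := Ordinal.div_add_mod x (ω ^ e)
      rcases lt_nadd_iff.1 hk with ⟨m', hm', hle⟩ | ⟨n', hn', hle⟩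
      · have key := IHp (m' ♯ n) (nadd_lt_nadd_right hm' n) m' n rfl
          (x % ω ^ e ♯ s) (x % ω ^ e) s rfl hu hs
        calc x = ω ^ e * (x / ω ^ e) + x % ω ^ e := hd.symm
          _ ≤ ω ^ e * (m' ♯ n) + x % ω ^ e := add_le_add_left (mul_le_mul_right hle _) _
          _ ≤ ω ^ e * (m' ♯ n) + (x % ω ^ e ♯ s) := add_le_add_right le_self_nadd _
          _ = (ω ^ e * m' + x % ω ^ e) ♯ (ω ^ e * n + s) := key.symm
          _ < (ω ^ e * m + t) ♯ (ω ^ e * n + s) := by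
              refine nadd_lt_nadd_right ?_ _
              calc ω ^ e * m' + x % ω ^ e < ω ^ e * m' + ω ^ e := add_lt_add_right hu _
                _ = ω ^ e * Order.succ m' := (Ordinal.mul_succ _ _).symm
                _ ≤ ω ^ e * m := mul_le_mul_right (Order.succ_le_of_lt hm') _
                _ ≤ ω ^ e * m + t := le_self_add
      · have key := IHp (m ♯ n') (nadd_lt_nadd_left hn' m) m n' rfl
          (t ♯ x % ω ^ e) t (x % ω ^ e) rfl ht hu
        calc x = ω ^ e * (x / ω ^ e) + x % ω ^ e := hd.symm
          _ ≤ ω ^ e * (m ♯ n') + x % ω ^ e := add_le_add_left (mul_le_mul_right hle _) _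
          _ ≤ ω ^ e * (m ♯ n') + (t ♯ x % ω ^ e) := add_le_add_right le_nadd_self _
          _ = (ω ^ e * m + t) ♯ (ω ^ e * n' + x % ω ^ e) := key.symm
          _ < (ω ^ e * m + t) ♯ (ω ^ e * n + s) := by
              refine nadd_lt_nadd_left ?_ _
              calc ω ^ e * n' + x % ω ^ e < ω ^ e * n' + ω ^ e := add_lt_add_right hu _
                _ = ω ^ e * Order.succ n' := (Ordinal.mul_succ _ _).symm
                _ ≤ ω ^ e * n := mul_le_mul_right (Order.succ_le_of_lt hn') _
                _ ≤ ω ^ e * n + s := le_self_add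
      
private lemma L0all : ∀ e a b : Ordinal, a < ω ^ e → b < ω ^ e → a ♯ b < ω ^ e := by
  intro e
  induction e using Ordinal.induction with
  | _ e IH =>
  intro a b ha hb
  rcases eq_or_ne a 0 with rfl | ha0
  · rwa [zero_nadd]
  rcases eq_or_ne b 0 with rfl | hb0
  · rwa [nadd_zero]
  have hda : Ordinal.log ω a < e := (lt_opow_iff_log_lt one_lt_omega0 ha0).1 ha
  have hdb : Ordinal.log ω b < e := (lt_opow_iff_log_lt one_lt_omega0 hb0).1 hb
  set d := max (Ordinal.log ω a) (Ordinal.log ω b) with hd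
  have hde : d < e := max_lt hda hdb
  have hW0 : (ω ^ d) ≠ 0 := (Ordinal.opow_pos d omega0_pos).ne'
  have hsd : ω ^ d * ω = ω ^ Order.succ d := (opow_succ ω d).symm
  have ha' : a < ω ^ d * ω := by
    rw [hsd]
    exact (lt_opow_succ_log_self one_lt_omega0 a).trans_le
      (Ordinal.opow_le_opow_right omega0_pos (Order.succ_le_succ (le_max_left _ _)))
  have hb' : b < ω ^ d * ω := by
    rw [hsd]
    exact (lt_opow_succ_log_self one_lt_omega0 b).trans_le
      (Ordinal.opow_le_opow_right omega0_pos (Order.succ_le_succ (le_max_right _ _)))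
  have hma : a / ω ^ d < ω := (Ordinal.div_lt hW0).2 ha'
  have hmb : b / ω ^ d < ω := (Ordinal.div_lt hW0).2 hb'
  have hta : a % ω ^ d < ω ^ d := Ordinal.mod_lt a hW0
  have htb : b % ω ^ d < ω ^ d := Ordinal.mod_lt b hW0
  have key := MI_of d (IH d hde) _ (a / ω ^ d) (b / ω ^ d) rfl _ (a % ω ^ d) (b % ω ^ d) rfl hta htb
  rw [Ordinal.div_add_mod, Ordinal.div_add_mod] at key
  rw [key]
  calc ω ^ d * (a / ω ^ d ♯ b / ω ^ d) + (a % ω ^ d ♯ b % ω ^ d)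
      < ω ^ d * (a / ω ^ d ♯ b / ω ^ d) + ω ^ d := add_lt_add_right (IH d hde _ _ hta htb) _
    _ = ω ^ d * Order.succ (a / ω ^ d ♯ b / ω ^ d) := (Ordinal.mul_succ _ _).symm
    _ ≤ ω ^ d * ω := mul_le_mul_right (Order.succ_le_of_lt (natCast_nadd_lt_omega0 hma hmb)) _
    _ = ω ^ Order.succ d := hsd
    _ ≤ ω ^ e := Ordinal.opow_le_opow_right omega0_pos (Order.succ_le_of_lt hde)

private lemma MI (e m n t s : Ordinal) (ht : t < ω ^ e) (hs : s < ω ^ e) :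
    (ω ^ e * m + t) ♯ (ω ^ e * n + s) = ω ^ e * (m ♯ n) + (t ♯ s) :=
  MI_of e (L0all e) _ m n rfl _ t s rfl ht hs

private lemma nadd_lt_principal {p a b : Ordinal} (hp : Ordinal.IsPrincipal (· + ·) p)
    (ha : a < p) (hb : b < p) : a ♯ b < p := by
  rcases Ordinal.principal_add_iff_zero_or_omega0_opow.1 hp with rfl | ⟨c, rfl⟩
  · exact absurd ha (not_lt_of_ge (zero_le (a := a)))
  · exact L0all c a b ha hb

private lemma opow_nadd_eq_add {e s : Ordinal} (hs : s < ω ^ Order.succ e) :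
    ω ^ e ♯ s = ω ^ e + s := by
  have hW0 : (ω ^ e) ≠ 0 := (Ordinal.opow_pos e omega0_pos).ne'
  have hms : s / ω ^ e < ω := (Ordinal.div_lt hW0).2 (by rwa [← opow_succ])
  have hts : s % ω ^ e < ω ^ e := Ordinal.mod_lt s hW0
  have hd : ω ^ e * (s / ω ^ e) + s % ω ^ e = s := Ordinal.div_add_mod s (ω ^ e)
  have key := MI e 1 (s / ω ^ e) 0 (s % ω ^ e) (Ordinal.opow_pos e omega0_pos) hts
  rw [hd, mul_one, add_zero, one_nadd, zero_nadd] at key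
  obtain ⟨k, hk⟩ := lt_omega0.1 hms
  have h1 : Order.succ ((k : Ordinal)) = ((k + 1 : ℕ) : Ordinal) := by push_cast; rfl
  rw [key, hk, h1]
  conv_rhs => rw [← hd, hk]
  have h2 : ω ^ e + ω ^ e * (k : Ordinal) = ω ^ e * ((k + 1 : ℕ) : Ordinal) := by
    have h3 : ((k + 1 : ℕ) : Ordinal) = 1 + (k : Ordinal) := by
      rw [Nat.add_comm]; push_cast; rfl
    rw [h3, mul_add, mul_one]
  rw [← add_assoc, h2]

private def M (δ : Ordinal) : Multiset Ordinal :=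
  if h : δ = 0 then 0 else
    have : δ - ω ^ Ordinal.log ω δ < δ := sub_log_lt h
    Ordinal.log ω δ ::ₘ M (δ - ω ^ Ordinal.log ω δ)
termination_by δ

private lemma M_zero : M 0 = 0 := by rw [M]; simp

private lemma M_pos {δ : Ordinal} (h : δ ≠ 0) :
    M δ = Ordinal.log ω δ ::ₘ M (δ - ω ^ Ordinal.log ω δ) := by rw [M]; simp [h]

private instance S_lc : LeftCommutative (fun (e : Ordinal) (acc : Ordinal) => ω ^ e ♯ acc) :=
  ⟨fun a b c => by rw [← nadd_assoc, nadd_comm (ω ^ a), nadd_assoc]⟩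

private def S (f : Multiset Ordinal) : Ordinal :=
  f.foldr (fun e acc => ω ^ e ♯ acc) 0

private lemma S_zero : S 0 = 0 := by simp [S]

private lemma S_cons (e : Ordinal) (f : Multiset Ordinal) : S (e ::ₘ f) = ω ^ e ♯ S f := by
  simp [S]

private lemma S_add (f g : Multiset Ordinal) : S (f + g) = S f ♯ S g := by
  induction f using Multiset.induction with
  | empty => simp [S, zero_nadd]
  | cons a f IH => rw [Multiset.cons_add, S_cons, S_cons, IH, nadd_assoc]

private lemma S_mem_le {e : Ordinal} {f : Multiset Ordinal} (h : e ∈ f) : ω ^ e ≤ S f := by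
  obtain ⟨g, rfl⟩ := Multiset.exists_cons_of_mem h
  rw [S_cons]
  exact le_self_nadd

private lemma S_lt_opow {f : Multiset Ordinal} {c : Ordinal} (h : ∀ x ∈ f, x < c) :
    S f < ω ^ c := by
  induction f using Multiset.induction with
  | empty => rw [S_zero]; exact Ordinal.opow_pos c omega0_pos
  | cons a f IH =>
    rw [S_cons]
    exact L0all c _ _ ((Ordinal.opow_lt_opow_iff_right one_lt_omega0).2
      (h a (Multiset.mem_cons_self a f))) (IH fun x hx => h x (Multiset.mem_cons_of_mem hx))

private lemma S_M : ∀ δ : Ordinal, S (M δ) = δ := by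
  intro δ
  induction δ using Ordinal.induction with
  | _ δ IH =>
  rcases eq_or_ne δ 0 with rfl | h0
  · rw [M_zero, S_zero]
  · rw [M_pos h0, S_cons, IH _ (sub_log_lt h0),
      opow_nadd_eq_add ((Ordinal.sub_le_self _ _).trans_lt (lt_opow_succ_log_self one_lt_omega0 δ)),
      Ordinal.add_sub_cancel_of_le (Ordinal.opow_log_le_self ω h0)]

private lemma M_S : ∀ δ : Ordinal, ∀ f, S f = δ → f = M δ := by
  intro δ
  induction δ using Ordinal.induction with
  | _ δ IH =>
  intro f hf
  rcases eq_or_ne δ 0 with rfl | h0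
  · rcases eq_or_ne f 0 with rfl | hf0
    · rw [M_zero]
    · obtain ⟨e, he⟩ := Multiset.exists_mem_of_ne_zero hf0
      have := hf ▸ S_mem_le he
      exact absurd (nonpos_iff_eq_zero.1 this) (Ordinal.opow_pos e omega0_pos).ne'
  · have hmem : Ordinal.log ω δ ∈ f := by
      by_contra hl
      have hlt : ∀ x ∈ f, x < Ordinal.log ω δ := by
        intro x hx
        have h1 : ω ^ x ≤ δ := hf ▸ S_mem_le hx
        have h2 : x ≤ Ordinal.log ω δ := (opow_le_iff_le_log one_lt_omega0 h0).1 h1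
        exact h2.lt_of_ne (fun hh => hl (hh ▸ hx))
      have := hf ▸ S_lt_opow hlt
      exact absurd (Ordinal.opow_log_le_self ω h0) this.not_ge
    obtain ⟨g, rfl⟩ := Multiset.exists_cons_of_mem hmem
    rw [S_cons] at hf
    have hδ : ω ^ Ordinal.log ω δ ♯ (δ - ω ^ Ordinal.log ω δ) = δ := by
      rw [opow_nadd_eq_add ((Ordinal.sub_le_self _ _).trans_lt
        (lt_opow_succ_log_self one_lt_omega0 δ)),
        Ordinal.add_sub_cancel_of_le (Ordinal.opow_log_le_self ω h0)]
    have hg : S g = δ - ω ^ Ordinal.log ω δ := nadd_left_cancel (hf.trans hδ.symm)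
    rw [M_pos h0, IH _ (sub_log_lt h0) g hg]

private lemma M_nadd (a b : Ordinal) : M (a ♯ b) = M a + M b :=
  (M_S (a ♯ b) (M a + M b) (by rw [S_add, S_M, S_M])).symm

private lemma M_add_le : ∀ a b : Ordinal, M (a + b) ≤ M a + M b := by
  intro a
  induction a using Ordinal.induction with
  | _ a IH =>
  intro b
  rcases eq_or_ne a 0 with rfl | ha0
  · simp [M_zero]
  rcases eq_or_ne b 0 with rfl | hb0
  · simp [M_zero]
  rcases lt_or_ge (Ordinal.log ω a) (Ordinal.log ω b) with h | h
  · have hab : a + b = b := by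
      have ha' : a < ω ^ Ordinal.log ω b := (lt_opow_succ_log_self one_lt_omega0 a).trans_le
        (Ordinal.opow_le_opow_right omega0_pos (Order.succ_le_of_lt h))
      calc a + b = a + (ω ^ Ordinal.log ω b + (b - ω ^ Ordinal.log ω b)) := by
            rw [Ordinal.add_sub_cancel_of_le (Ordinal.opow_log_le_self ω hb0)]
        _ = (a + ω ^ Ordinal.log ω b) + (b - ω ^ Ordinal.log ω b) := (add_assoc _ _ _).symm
        _ = ω ^ Ordinal.log ω b + (b - ω ^ Ordinal.log ω b) := by
            rw [Ordinal.add_omega0_opow ha']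
        _ = b := Ordinal.add_sub_cancel_of_le (Ordinal.opow_log_le_self ω hb0)
    rw [hab]
    exact le_add_self
  · have key : a + b = ω ^ Ordinal.log ω a + ((a - ω ^ Ordinal.log ω a) + b) := by
      rw [← add_assoc, Ordinal.add_sub_cancel_of_le (Ordinal.opow_log_le_self ω ha0)]
    have hx : (a - ω ^ Ordinal.log ω a) + b < ω ^ Order.succ (Ordinal.log ω a) := by
      refine Ordinal.principal_add_omega0_opow _ ((Ordinal.sub_le_self _ _).trans_lt
        (lt_opow_succ_log_self one_lt_omega0 a)) ?_
      exact (lt_opow_succ_log_self one_lt_omega0 b).trans_le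
        (Ordinal.opow_le_opow_right omega0_pos (Order.succ_le_succ h))
    have hne : a + b ≠ 0 := by
      intro hh
      exact ha0 (nonpos_iff_eq_zero.1 (hh ▸ (le_self_add : a ≤ a + b)))
    have hlog : Ordinal.log ω (a + b) = Ordinal.log ω a := by
      apply le_antisymm
      · have h2 : a + b < ω ^ Order.succ (Ordinal.log ω a) := by
          rw [key]
          exact Ordinal.principal_add_omega0_opow _
            ((Ordinal.opow_lt_opow_iff_right one_lt_omega0).2 (Order.lt_succ _)) hx
        exact Order.lt_succ_iff.1 ((lt_opow_iff_log_lt one_lt_omega0 hne).1 h2)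
      · refine (opow_le_iff_le_log one_lt_omega0 hne).1 ?_
        rw [key]
        exact le_self_add
    have hsub : (a + b) - ω ^ Ordinal.log ω a = (a - ω ^ Ordinal.log ω a) + b := by
      rw [key, Ordinal.add_sub_cancel]
    rw [M_pos hne, hlog, hsub, M_pos ha0, Multiset.cons_add]
    exact Multiset.cons_le_cons _ (IH _ (sub_log_lt ha0) b)

-- Hull API
def Closed (α : Ordinal) (X Y : Set Ordinal) : Prop :=
  X ∪ {0, I} ⊆ Y ∧ (∀ γ ∈ Y, ∀ δ ∈ Y, γ + δ ∈ Y) ∧ (∀ γ ∈ Y, Ordinal.omega0 ^ γ ∈ Y) ∧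
    (∀ γ ∈ Y, Om γ ∈ Y) ∧ (∀ σ ∈ R, ∀ β ∈ Y, β < α → σ ∈ Y → psiOf (H β) σ ∈ Y)

lemma H_eq (α : Ordinal) (X : Set Ordinal) : H α X = ⋂₀ {Y | Closed α X Y} := by
  rw [H]; rfl

lemma mem_H_iff {δ α : Ordinal} {X : Set Ordinal} :
    δ ∈ H α X ↔ ∀ Y, Closed α X Y → δ ∈ Y := by
  rw [H_eq]
  exact Set.mem_sInter

lemma H_zero_mem {α : Ordinal} {X : Set Ordinal} : 0 ∈ H α X :=
  mem_H_iff.2 fun _ hY => hY.1 (Set.mem_union_right _ (Set.mem_insert _ _))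

lemma H_I_mem {α : Ordinal} {X : Set Ordinal} : I ∈ H α X :=
  mem_H_iff.2 fun _ hY => hY.1 (Set.mem_union_right _ (Set.mem_insert_of_mem _ rfl))

lemma H_X_sub {α : Ordinal} {X : Set Ordinal} : X ⊆ H α X :=
  fun _ hx => mem_H_iff.2 fun _ hY => hY.1 (Set.mem_union_left _ hx)

lemma H_add {α a b : Ordinal} {X : Set Ordinal} (ha : a ∈ H α X) (hb : b ∈ H α X) :
    a + b ∈ H α X :=
  mem_H_iff.2 fun Y hY => hY.2.1 a (mem_H_iff.1 ha Y hY) b (mem_H_iff.1 hb Y hY)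

lemma H_opow {α a : Ordinal} {X : Set Ordinal} (ha : a ∈ H α X) :
    Ordinal.omega0 ^ a ∈ H α X :=
  mem_H_iff.2 fun Y hY => hY.2.2.1 a (mem_H_iff.1 ha Y hY)

lemma H_Om {α a : Ordinal} {X : Set Ordinal} (ha : a ∈ H α X) : Om a ∈ H α X :=
  mem_H_iff.2 fun Y hY => hY.2.2.2.1 a (mem_H_iff.1 ha Y hY)

lemma H_psi {α σ β : Ordinal} {X : Set Ordinal} (hσ : σ ∈ R) (hβ : β ∈ H α X)
    (h : β < α) (hσH : σ ∈ H α X) : psiOf (H β) σ ∈ H α X :=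
  mem_H_iff.2 fun Y hY => hY.2.2.2.2 σ hσ β (mem_H_iff.1 hβ Y hY) h (mem_H_iff.1 hσH Y hY)

lemma H_min {α : Ordinal} {X Y : Set Ordinal} (hY : Closed α X Y) : H α X ⊆ Y :=
  fun _ hx => mem_H_iff.1 hx Y hY

-- sums of ω-powers in the hull
lemma S_mem_H {α : Ordinal} {X : Set Ordinal} :
    ∀ δ (f : Multiset Ordinal), S f = δ → (∀ e ∈ f, Ordinal.omega0 ^ e ∈ H α X) →
      δ ∈ H α X := by
  intro δ
  induction δ using Ordinal.induction with
  | _ δ IH =>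
  intro f hf he
  rcases eq_or_ne δ 0 with rfl | h0
  · exact H_zero_mem
  have hfM : f = M δ := M_S δ f hf
  have hl : Ordinal.omega0 ^ Ordinal.log ω δ ∈ H α X := by
    refine he _ ?_
    rw [hfM, M_pos h0]
    exact Multiset.mem_cons_self _ _
  have hr : (δ - ω ^ Ordinal.log ω δ) ∈ H α X := by
    refine IH _ (sub_log_lt h0) (M (δ - ω ^ Ordinal.log ω δ)) (S_M _) ?_
    intro e hee
    refine he e ?_
    rw [hfM, M_pos h0]
    exact Multiset.mem_cons_of_mem hee
  have := H_add hl hr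
  rwa [Ordinal.add_sub_cancel_of_le (Ordinal.opow_log_le_self ω h0)] at this

lemma princ_part {α p γ b : Ordinal} {X : Set Ordinal} (hp : Ordinal.IsPrincipal (· + ·) p)
    (hmem : p ∈ H α X) (h : γ ♯ b = p) : γ ∈ H α X := by
  rcases lt_or_ge γ p with h1 | h1
  · rcases lt_or_ge b p with h2 | h2
    · exact absurd h (nadd_lt_principal hp h1 h2).ne
    · have hb : b = p := le_antisymm (h ▸ le_nadd_self) h2
      rw [hb] at h
      have hγ : γ = 0 := nadd_right_cancel (h.trans (zero_nadd p).symm)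
      rw [hγ]; exact H_zero_mem
  · have : γ = p := le_antisymm (h ▸ le_self_nadd) h1
    rwa [this]

lemma ord_principal {c : Cardinal} (hc : Cardinal.aleph0 ≤ c) :
    Ordinal.IsPrincipal (· + ·) c.ord := by
  intro a b ha hb
  rw [Cardinal.lt_ord] at ha hb ⊢
  rw [Ordinal.card_add]
  exact Cardinal.add_lt_of_lt hc ha hb

lemma Om_principal (γ : Ordinal) : Ordinal.IsPrincipal (· + ·) (Om γ) := by
  rcases eq_or_ne γ 0 with rfl | h
  · rw [Om, if_pos rfl]
    exact Ordinal.principal_zero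
  · rw [Om, if_neg h]
    exact ord_principal (Cardinal.aleph0_le_aleph γ)

lemma I_principal : Ordinal.IsPrincipal (· + ·) I := by
  rcases Set.eq_empty_or_nonempty {c : Cardinal | WeaklyInaccessible c} with he | hne
  · have : I = 0 := by rw [I, he, Cardinal.sInf_empty]; exact Cardinal.ord_zero
    rw [this]
    exact Ordinal.principal_zero
  · exact ord_principal (csInf_mem hne).1.le

lemma R_principal {σ : Ordinal} (hσ : σ ∈ R) :
    Ordinal.IsPrincipal (· + ·) σ := by
  rcases hσ with ⟨μ, _, rfl⟩ | rfl
  · exact Om_principal _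
  · exact I_principal

lemma psiOf_principal {β σ : Ordinal}
    (hσ : σ ∈ R) : Ordinal.IsPrincipal (· + ·) (psiOf (H β) σ) := by
  have hmem : psiOf (H β) σ ∈
      ({β' | β' < σ ∧ σ ∈ H β (Set.Iio β') ∧ H β (Set.Iio β') ∩ Set.Iio σ ⊆ Set.Iio β'} ∪
        {σ} : Set Ordinal) :=
    csInf_mem ⟨σ, Or.inr rfl⟩
  rcases hmem with ⟨h1, _, h3⟩ | hh
  · intro a b ha hb
    have hab : a + b ∈ H β (Set.Iio (psiOf (H β) σ)) := H_add (H_X_sub ha) (H_X_sub hb)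
    exact h3 ⟨hab, R_principal hσ (ha.trans h1) (hb.trans h1)⟩
  · rw [Set.mem_singleton_iff.1 hh]
    exact R_principal hσ

lemma parts_mem {α c : Ordinal} :
    ∀ δ ∈ H α (Set.Iio c), ∀ γ b, γ ♯ b = δ → γ ∈ H α (Set.Iio c) := by
  have main : H α (Set.Iio c) ⊆
      {δ | δ ∈ H α (Set.Iio c) ∧ ∀ γ b, γ ♯ b = δ → γ ∈ H α (Set.Iio c)} := by
    apply H_min
    refine ⟨?_, ?_, ?_, ?_, ?_⟩
    · intro x hx
      rcases hx with hx | hx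
      · exact ⟨H_X_sub hx, fun γ b h => H_X_sub (lt_of_le_of_lt (h ▸ le_self_nadd) hx)⟩
      · rcases hx with rfl | hx
        · exact ⟨H_zero_mem, fun γ b h => princ_part Ordinal.principal_zero H_zero_mem h⟩
        · rw [Set.mem_singleton_iff.1 hx]
          exact ⟨H_I_mem, fun γ b h => princ_part I_principal H_I_mem h⟩
    · rintro x ⟨hxH, hxP⟩ y ⟨hyH, hyP⟩
      refine ⟨H_add hxH hyH, ?_⟩
      intro γ b h
      refine S_mem_H γ (M γ) (S_M γ) ?_
      intro e he
      have h1 : M γ ≤ M x + M y := by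
        calc M γ ≤ M γ + M b := le_self_add
          _ = M (γ ♯ b) := (M_nadd γ b).symm
          _ = M (x + y) := by rw [h]
          _ ≤ M x + M y := M_add_le x y
      rcases Multiset.mem_add.1 (Multiset.mem_of_le h1 he) with he' | he'
      · obtain ⟨g, hg⟩ := Multiset.exists_cons_of_mem he'
        exact hxP _ _ (by rw [← S_cons, ← hg, S_M])
      · obtain ⟨g, hg⟩ := Multiset.exists_cons_of_mem he'
        exact hyP _ _ (by rw [← S_cons, ← hg, S_M])
    · rintro x ⟨hxH, _⟩
      exact ⟨H_opow hxH,
        fun γ b h => princ_part (Ordinal.principal_add_omega0_opow _) (H_opow hxH) h⟩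
    · rintro x ⟨hxH, _⟩
      exact ⟨H_Om hxH, fun γ b h => princ_part (Om_principal _) (H_Om hxH) h⟩
    · rintro σ hσ β ⟨hβH, _⟩ hβα ⟨hσH, _⟩
      exact ⟨H_psi hσ hβH hβα hσH,
        fun γ b h => princ_part (psiOf_principal hσ) (H_psi hσ hβH hβα hσH) h⟩
  exact fun δ hδ γ b h => (main hδ).2 γ b h


theorem stmt16 (hex : ∃ c : Cardinal, WeaklyInaccessible c)
    (α β : Ordinal) (hβ : 0 < β) : llr 0 α (α ♯ β) := by
  refine ⟨?_, ?_⟩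
  · calc α = α ♯ 0 := (nadd_zero α).symm
      _ < α ♯ β := nadd_lt_nadd_left hβ α
  · intro σ hσ α' h1 _
    exact parts_mem _ h1 α β rfl

end
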